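/- Let g: T_0 → T be a proper continuous surjection of locally compact Hausdorff spaces which is at most N-to-one, with T_0 second countable and totally disconnected, F a sheaf on T, and F^n = (g_n)_*(g_n^* F). Define the subsheaf F^{n,a} ⊆ F^n by Γ(U, F^{n,a}) = {x ∈ Γ(U, F^n) : supp x ⊆ T_n^f and s·x = (−1)^{|s|} x for all s ∈ S_{n+1}}, where the support is taken in T_n via the identification of sections of F^n over U with sections of g_n^*F over g_n^{-1}(U). Then the sheaf F^{n,a} is c-soft. -/

import Mathlib

structure EtaleSheaf (X : Type) [TopologicalSpace X] where
  E : Type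
  tE : TopologicalSpace E
  proj : E → X
  etale : @IsLocalHomeomorph E X tE _ proj

attribute [instance] EtaleSheaf.tE

structure AbEtaleSheaf (X : Type) [TopologicalSpace X] extends EtaleSheaf X where
  add : E → E → E
  zero : X → E
  neg : E → E
  proj_add : ∀ e e', proj e = proj e' → proj (add e e') = proj e
  proj_zero : ∀ x, proj (zero x) = x
  proj_neg : ∀ e, proj (neg e) = proj e
  add_assoc : ∀ e e' e'', proj e = proj e' → proj e' = proj e'' →
    add (add e e') e'' = add e (add e' e'')
  add_comm : ∀ e e', proj e = proj e' → add e e' = add e' e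
  add_zero : ∀ e, add e (zero (proj e)) = e
  add_neg : ∀ e, add e (neg e) = zero (proj e)
  continuous_zero : Continuous zero
  continuous_neg : Continuous neg
  continuous_add : ContinuousOn (fun p : E × E => add p.1 p.2) {p | proj p.1 = proj p.2}

namespace AbEtaleSheaf

variable {X : Type} [TopologicalSpace X]

def Sect (F : AbEtaleSheaf X) (U : Set X) : Type :=
  {s : U → F.E // Continuous s ∧ ∀ x : U, F.proj (s x) = x}

def suppSect (F : AbEtaleSheaf X) {U : Set X} (s : F.Sect U) : Set X :=
  Subtype.val '' {x : U | s.1 x ≠ F.zero x}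

def Stalk (F : AbEtaleSheaf X) (x : X) : Type := {e : F.E // F.proj e = x}

lemma zero_add' (F : AbEtaleSheaf X) (e : F.E) : F.add (F.zero (F.proj e)) e = e := by
  rw [F.add_comm _ _ (by rw [F.proj_zero])]
  exact F.add_zero e

lemma neg_add' (F : AbEtaleSheaf X) (e : F.E) : F.add (F.neg e) e = F.zero (F.proj e) := by
  rw [F.add_comm _ _ (by rw [F.proj_neg])]
  exact F.add_neg e

noncomputable instance stalkZero (F : AbEtaleSheaf X) (x : X) : Zero (F.Stalk x) :=
  ⟨⟨F.zero x, F.proj_zero x⟩⟩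

noncomputable instance stalkAdd (F : AbEtaleSheaf X) (x : X) : Add (F.Stalk x) :=
  ⟨fun e e' => ⟨F.add e.1 e'.1, by rw [F.proj_add e.1 e'.1 (by rw [e.2, e'.2]), e.2]⟩⟩

noncomputable instance stalkNeg (F : AbEtaleSheaf X) (x : X) : Neg (F.Stalk x) :=
  ⟨fun e => ⟨F.neg e.1, by rw [F.proj_neg, e.2]⟩⟩

noncomputable instance (F : AbEtaleSheaf X) (x : X) : AddCommGroup (F.Stalk x) where
  add := (· + ·)
  zero := 0
  neg := Neg.neg
  add_assoc e e' e'' := Subtype.ext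
    (F.add_assoc _ _ _ (by rw [e.2, e'.2]) (by rw [e'.2, e''.2]))
  zero_add := fun ⟨e, he⟩ => Subtype.ext (by subst he; exact F.zero_add' e)
  add_zero := fun ⟨e, he⟩ => Subtype.ext (by subst he; exact F.add_zero e)
  neg_add_cancel := fun ⟨e, he⟩ => Subtype.ext (by subst he; exact F.neg_add' e)
  add_comm e e' := Subtype.ext (F.add_comm e.1 e'.1 (by rw [e.2, e'.2]))
  nsmul := nsmulRec
  zsmul := zsmulRec

end AbEtaleSheaf

/-- The `(n+1)`-fold fiber power `T_n` of a map `g : T0 → T`. -/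
def FibPow {T0 T : Type} (g : T0 → T) (n : ℕ) : Type :=
  {t : Fin (n + 1) → T0 // ∀ i j, g (t i) = g (t j)}

instance {T0 T : Type} [TopologicalSpace T0] (g : T0 → T) (n : ℕ) :
    TopologicalSpace (FibPow g n) :=
  instTopologicalSpaceSubtype

/-- The induced map `g_n : T_n → T`. -/
def FibPow.proj {T0 T : Type} (g : T0 → T) (n : ℕ) (t : FibPow g n) : T := g (t.1 0)

/-- The permutation action of `S_{n+1}` on `T_n`. -/
def FibPow.permTuple {T0 T : Type} (g : T0 → T) (n : ℕ) (σ : Equiv.Perm (Fin (n + 1)))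
    (t : FibPow g n) : FibPow g n :=
  ⟨fun i => t.1 (σ i), fun i j => t.2 (σ i) (σ j)⟩

lemma FibPow.proj_permTuple {T0 T : Type} (g : T0 → T) (n : ℕ)
    (σ : Equiv.Perm (Fin (n + 1))) (t : FibPow g n) :
    FibPow.proj g n (FibPow.permTuple g n σ t) = FibPow.proj g n t :=
  t.2 (σ 0) 0

/-- The free part `T_n^f ⊆ T_n`: tuples with pairwise distinct coordinates. -/
def FibPow.freePart {T0 T : Type} (g : T0 → T) (n : ℕ) : Set (FibPow g n) :=
  {t | Function.Injective t.1}

variable {T0 T : Type} [TopologicalSpace T0] [TopologicalSpace T]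

/-- A section of the **alternating subsheaf** `F^{n,a} ⊆ F^n = (g_n)_*(g_n^* F)` over
`U ⊆ T`: sections of `F^n` over `U` are identified with sections of the pullback
`g_n^* F` over `g_n⁻¹(U)`, i.e. continuous maps `s : g_n⁻¹(U) → F.E` with
`F.proj ∘ s = g_n`; the alternating condition requires `σ · s = (−1)^{|σ|} s` for all
`σ ∈ S_{n+1}` and that the support of `s` is contained in the free part `T_n^f`. -/
def AltSect (F : AbEtaleSheaf T) (g : T0 → T) (n : ℕ) (U : Set T) : Type :=
  {s : ↥(FibPow.proj g n ⁻¹' U) → F.E //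
    Continuous s ∧
    (∀ z : ↥(FibPow.proj g n ⁻¹' U), F.proj (s z) = FibPow.proj g n z.1) ∧
    (∀ (σ : Equiv.Perm (Fin (n + 1))) (z : ↥(FibPow.proj g n ⁻¹' U)),
      s ⟨FibPow.permTuple g n σ z.1, by
          show FibPow.proj g n (FibPow.permTuple g n σ z.1) ∈ U
          rw [FibPow.proj_permTuple]
          exact z.2⟩ =
        if Equiv.Perm.sign σ = 1 then s z else F.neg (s z)) ∧
    (∀ z : ↥(FibPow.proj g n ⁻¹' U), z.1 ∉ FibPow.freePart g n →
      s z = F.zero (FibPow.proj g n z.1))}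


/-- In a locally compact Hausdorff totally disconnected space, any compact set inside
an open set can be separated by a compact open set. -/
lemma exists_isCompact_isOpen_between {X : Type*} [TopologicalSpace X]
    [LocallyCompactSpace X] [T2Space X] [TotallyDisconnectedSpace X]
    {C O : Set X} (hC : IsCompact C) (hO : IsOpen O) (hCO : C ⊆ O) :
    ∃ W : Set X, IsCompact W ∧ IsOpen W ∧ C ⊆ W ∧ W ⊆ O := by
  have key : ∀ x ∈ C, ∃ V : Set X, IsCompact V ∧ IsOpen V ∧ x ∈ V ∧ V ⊆ O := by
    intro x hx
    obtain ⟨s, hs, hxs, hsO⟩ := exists_compact_subset hO (hCO hx)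
    obtain ⟨V, hVclopen, hxV, hVsub⟩ :=
      (loc_compact_Haus_tot_disc_of_zero_dim (H := X)).exists_subset_of_mem_open hxs
        isOpen_interior
    exact ⟨V, hs.of_isClosed_subset hVclopen.isClosed (hVsub.trans interior_subset),
      hVclopen.isOpen, hxV, (hVsub.trans interior_subset).trans hsO⟩
  choose V hVc hVo hxV hVO using key
  obtain ⟨t, hcov⟩ := hC.elim_nhds_subcover' (fun x hx => V x hx)
    (fun x hx => (hVo x hx).mem_nhds (hxV x hx))
  refine ⟨⋃ x ∈ t, V x.1 x.2, ?_, ?_, ?_, ?_⟩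
  · exact t.isCompact_biUnion (fun x _ => hVc _ _)
  · exact isOpen_biUnion (fun x _ => hVo _ _)
  · exact hcov
  · exact Set.iUnion₂_subset fun x _ => hVO _ _

/-- Let `g : T₀ → T` be a proper continuous surjection of locally
compact Hausdorff spaces which is at most `N`-to-one, with `T₀` second countable and
totally disconnected, `F` a sheaf (of abelian groups) on `T`, and
`F^n = (g_n)_*(g_n^* F)`.  Then the alternating subsheaf `F^{n,a} ⊆ F^n` (sections
supported on the free part `T_n^f` transforming by the sign character of `S_{n+1}`) is
c-soft: every section defined near a compact set extends globally (local extension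
criterion). -/
theorem alternating_subsheaf_is_csoft
    [T2Space T0] [LocallyCompactSpace T0] [SecondCountableTopology T0]
    [TotallyDisconnectedSpace T0] [T2Space T] [LocallyCompactSpace T]
    (g : T0 → T) (hc : Continuous g) (hp : IsProperMap g)
    (hsurj : Function.Surjective g) (N : ℕ)
    (hN : ∀ x : T, (g ⁻¹' {x}).Finite ∧ (g ⁻¹' {x}).ncard ≤ N)
    (F : AbEtaleSheaf T) (n : ℕ) :
    ∀ K : Set T, IsCompact K → ∀ U : Set T, IsOpen U → K ⊆ U →
      ∀ s : AltSect F g n U,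
        ∃ V : Set T, IsOpen V ∧ K ⊆ V ∧ ∃ hVU : V ⊆ U,
          ∃ t : AltSect F g n Set.univ,
            ∀ (z : FibPow g n) (hz : FibPow.proj g n z ∈ V),
              t.1 ⟨z, Set.mem_univ _⟩ = s.1 ⟨z, hVU hz⟩ := by
  classical
  intro K hK U hU hKU s
  have hprojcont : Continuous (FibPow.proj g n) :=
    hc.comp ((continuous_apply (0 : Fin (n + 1))).comp continuous_subtype_val)
  have hperm_cont : ∀ σ : Equiv.Perm (Fin (n + 1)),
      Continuous (FibPow.permTuple g n σ) := by
    intro σ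
    apply Continuous.subtype_mk
    exact continuous_pi fun i => (continuous_apply (σ i)).comp continuous_subtype_val
  -- the ambient closed set `T_n` inside the product
  have hTclosed : IsClosed {t : Fin (n + 1) → T0 | ∀ i j, g (t i) = g (t j)} := by
    have : {t : Fin (n + 1) → T0 | ∀ i j, g (t i) = g (t j)} =
        ⋂ i, ⋂ j, {t : Fin (n + 1) → T0 | g (t i) = g (t j)} := by
      ext t; simp [Set.mem_iInter]
    rw [this]
    exact isClosed_iInter fun i => isClosed_iInter fun j =>
      isClosed_eq (hc.comp (continuous_apply i)) (hc.comp (continuous_apply j))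
  -- the compact set `g_n⁻¹ K` viewed in the product, and the open set above `U`
  set C₀ : Set (Fin (n + 1) → T0) :=
    {t | ∀ i j, g (t i) = g (t j)} ∩ ((fun t => g (t 0)) ⁻¹' K) with hC₀def
  set O₀ : Set (Fin (n + 1) → T0) := (fun t => g (t 0)) ⁻¹' U with hO₀def
  have hO₀open : IsOpen O₀ := hU.preimage (hc.comp (continuous_apply 0))
  have hC₀compact : IsCompact C₀ := by
    have hsub : C₀ ⊆ Set.pi Set.univ fun _ : Fin (n + 1) => g ⁻¹' K := by
      rintro t ⟨ht, ht0⟩ i -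
      have h1 : g (t i) = g (t 0) := ht i 0
      simpa [h1] using ht0
    have hbig : IsCompact (Set.pi Set.univ fun _ : Fin (n + 1) => g ⁻¹' K) :=
      isCompact_univ_pi fun _ => hp.isCompact_preimage hK
    refine hbig.of_isClosed_subset ?_ hsub
    exact hTclosed.inter (hK.isClosed.preimage (hc.comp (continuous_apply 0)))
  have hC₀O₀ : C₀ ⊆ O₀ := fun t ht => hKU ht.2
  obtain ⟨W₀, hW₀c, hW₀o, hCW₀, hW₀O⟩ :=
    exists_isCompact_isOpen_between hC₀compact hO₀open hC₀O₀
  -- the compact open set `W` in `T_n` and its symmetrization `W'`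
  set W : Set (FibPow g n) := Subtype.val ⁻¹' W₀ with hWdef
  have hWopen : IsOpen W := hW₀o.preimage continuous_subtype_val
  have hWclosed : IsClosed W := hW₀c.isClosed.preimage continuous_subtype_val
  have himg : (Subtype.val '' W : Set (Fin (n + 1) → T0)) =
      W₀ ∩ {t | ∀ i j, g (t i) = g (t j)} := by
    ext x
    constructor
    · rintro ⟨z, hz, rfl⟩; exact ⟨hz, z.2⟩
    · rintro ⟨hx, hxT⟩; exact ⟨⟨x, hxT⟩, hx, rfl⟩
  have hind : Topology.IsInducing (Subtype.val : FibPow g n → (Fin (n + 1) → T0)) :=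
    ⟨rfl⟩
  have hWcompact : IsCompact W := by
    exact (hind.isCompact_iff (s := W)).2 (himg ▸ hW₀c.inter_right hTclosed)
  set W' : Set (FibPow g n) := ⋂ σ : Equiv.Perm (Fin (n + 1)),
    FibPow.permTuple g n σ ⁻¹' W with hW'def
  have hW'open : IsOpen W' :=
    isOpen_iInter_of_finite fun σ => hWopen.preimage (hperm_cont σ)
  have hW'closed : IsClosed W' :=
    isClosed_iInter fun σ => hWclosed.preimage (hperm_cont σ)
  have hpermone : ∀ z : FibPow g n, FibPow.permTuple g n 1 z = z := fun z => rfl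
  have hpermmul : ∀ (σ τ : Equiv.Perm (Fin (n + 1))) (z : FibPow g n),
      FibPow.permTuple g n τ (FibPow.permTuple g n σ z) =
        FibPow.permTuple g n (σ * τ) z := fun σ τ z => rfl
  have hW'subW : W' ⊆ W := fun z hz => Set.mem_iInter.1 hz 1
  have hW'compact : IsCompact W' := hWcompact.of_isClosed_subset hW'closed hW'subW
  have hW'inv : ∀ (σ : Equiv.Perm (Fin (n + 1))) (z : FibPow g n), z ∈ W' →
      FibPow.permTuple g n σ z ∈ W' := by
    intro σ z hz
    refine Set.mem_iInter.2 fun τ => ?_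
    exact Set.mem_iInter.1 hz (σ * τ)
  have hfib : FibPow.proj g n ⁻¹' K ⊆ W' := by
    intro z hz
    refine Set.mem_iInter.2 fun σ => ?_
    refine hCW₀ ⟨(FibPow.permTuple g n σ z).2, ?_⟩
    show g (z.1 (σ 0)) ∈ K
    have h1 : g (z.1 (σ 0)) = g (z.1 0) := z.2 (σ 0) 0
    rwa [h1]
  have hW'U : ∀ z ∈ W', FibPow.proj g n z ∈ U := fun z hz => hW₀O (hW'subW hz)
  -- the induced closed map on products, and the open set `V`
  have hΦ : IsClosedMap (fun (t : Fin (n + 1) → T0) (i : Fin (n + 1)) => g (t i)) :=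
    (IsProperMap.pi_map fun _ : Fin (n + 1) => hp).isClosedMap
  have hVcl : IsClosed (FibPow.proj g n '' W'ᶜ) := by
    have he : FibPow.proj g n '' W'ᶜ =
        (fun x : T => fun _ : Fin (n + 1) => x) ⁻¹'
          ((fun (t : Fin (n + 1) → T0) (i : Fin (n + 1)) => g (t i)) ''
            (Subtype.val '' W'ᶜ)) := by
      ext x
      constructor
      · rintro ⟨z, hz, rfl⟩
        refine ⟨z.1, ⟨z, hz, rfl⟩, ?_⟩
        funext i
        exact z.2 i 0
      · rintro ⟨t, ⟨z, hz, rfl⟩, ht⟩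
        exact ⟨z, hz, congrFun ht 0⟩
    rw [he]
    refine IsClosed.preimage (continuous_pi fun _ => continuous_id) ?_
    exact hΦ _ (hTclosed.isClosedEmbedding_subtypeVal.isClosedMap _
      hW'open.isClosed_compl)
  have hVW' : ∀ z : FibPow g n, FibPow.proj g n z ∈ (FibPow.proj g n '' W'ᶜ)ᶜ →
      z ∈ W' := by
    intro z hz
    by_contra hzW'
    exact hz ⟨z, hzW', rfl⟩
  have hVU : (FibPow.proj g n '' W'ᶜ)ᶜ ⊆ U := by
    intro x hx
    obtain ⟨t0, ht0⟩ := hsurj x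
    have hz : FibPow.proj g n ⟨fun _ => t0, fun i j => rfl⟩ = x := ht0
    have := hVW' ⟨fun _ => t0, fun i j => rfl⟩ (by rwa [hz])
    have := hW'U _ this
    rwa [hz] at this
  -- construct the global section
  set zeroExt : FibPow g n → F.E := fun z => F.zero (FibPow.proj g n z) with hzeroExt
  have hzeroExtcont : Continuous zeroExt := F.continuous_zero.comp hprojcont
  set sExt : FibPow g n → F.E :=
    fun z => if h : FibPow.proj g n z ∈ U then s.1 ⟨z, h⟩ else zeroExt z with hsExt
  have hsExt_on : ContinuousOn sExt (FibPow.proj g n ⁻¹' U) := by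
    rw [continuousOn_iff_continuous_restrict]
    have : (FibPow.proj g n ⁻¹' U).restrict sExt = s.1 := by
      funext z
      exact dif_pos z.2
    change Continuous ((FibPow.proj g n ⁻¹' U).restrict sExt)
    rw [this]
    exact s.2.1
  set h : FibPow g n → F.E := fun z => if z ∈ W' then sExt z else zeroExt z with hh
  have hcont : Continuous h := by
    rw [continuous_iff_continuousAt]
    intro z
    by_cases hz : z ∈ W'
    · have hev : h =ᶠ[nhds z] sExt :=
        Filter.eventually_of_mem (hW'open.mem_nhds hz) fun w hw => if_pos hw
      have hca : ContinuousAt sExt z :=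
        hsExt_on.continuousAt ((hU.preimage hprojcont).mem_nhds (hW'U z hz))
      exact hca.congr_of_eventuallyEq hev
    · have hev : h =ᶠ[nhds z] zeroExt :=
        Filter.eventually_of_mem (hW'closed.isOpen_compl.mem_nhds hz)
          fun w hw => if_neg hw
      exact (hzeroExtcont.continuousAt).congr_of_eventuallyEq hev
  have hval : ∀ (z : FibPow g n) (hz : z ∈ W'), h z = s.1 ⟨z, hW'U z hz⟩ := by
    intro z hz
    show (if z ∈ W' then sExt z else zeroExt z) = _
    rw [if_pos hz]
    exact dif_pos (hW'U z hz)
  have hval0 : ∀ z : FibPow g n, z ∉ W' → h z = F.zero (FibPow.proj g n z) :=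
    fun z hz => if_neg hz
  have hnegzero : ∀ x : T, F.neg (F.zero x) = F.zero x := by
    intro x
    have : -(0 : F.Stalk x) = 0 := neg_zero
    exact congrArg Subtype.val this
  refine ⟨(FibPow.proj g n '' W'ᶜ)ᶜ, hVcl.isOpen_compl, ?_, hVU,
    (⟨fun z => h z.1, hcont.comp continuous_subtype_val, ?_, ?_, ?_⟩ :
      AltSect F g n Set.univ), ?_⟩
  · -- K ⊆ V
    intro x hx
    rintro ⟨z, hz, rfl⟩
    exact hz (hfib hx)
  · -- projection property
    intro z
    show F.proj (h z.1) = FibPow.proj g n z.1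
    by_cases hz : z.1 ∈ W'
    · rw [hval z.1 hz]
      exact s.2.2.1 ⟨z.1, hW'U z.1 hz⟩
    · rw [hval0 z.1 hz]
      exact F.proj_zero _
  · -- alternating property
    intro σ z
    show h (FibPow.permTuple g n σ z.1) =
      if Equiv.Perm.sign σ = 1 then h z.1 else F.neg (h z.1)
    by_cases hz : z.1 ∈ W'
    · have hz' : FibPow.permTuple g n σ z.1 ∈ W' := hW'inv σ z.1 hz
      rw [hval _ hz', hval _ hz]
      exact s.2.2.2.1 σ ⟨z.1, hW'U z.1 hz⟩
    · have hz' : FibPow.permTuple g n σ z.1 ∉ W' := by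
        intro hmem
        apply hz
        have := hW'inv σ⁻¹ _ hmem
        rwa [hpermmul, mul_inv_cancel, hpermone] at this
      rw [hval0 _ hz', hval0 _ hz, FibPow.proj_permTuple, hnegzero]
      split <;> rfl
  · -- support property
    intro z hzfree
    show h z.1 = F.zero (FibPow.proj g n z.1)
    by_cases hz : z.1 ∈ W'
    · rw [hval z.1 hz]
      exact s.2.2.2.2 ⟨z.1, hW'U z.1 hz⟩ hzfree
    · exact hval0 z.1 hz
  · -- agreement on V
    intro z hz
    have hzW' : z ∈ W' := hVW' z hz
    show h z = s.1 ⟨z, hVU hz⟩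
    rw [hval z hzW']
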